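/- Let p be an odd prime, q = p^s, F = GF(q). In the code of the Type I-B graph G(p,s) over GF(p), the vector taking value 1 at r, at v_0, and at each (0,j) with j ∈ F \ {0}; value −1 at v_{−1} and at each (y,y) with y ∈ F \ {0}; and value 0 elsewhere, is a codeword of Hamming weight 2q + 1. Consequently the minimum distance d_min of this p-ary code satisfies q + 1 ≤ d_min ≤ 2q + 1. -/

import Mathlib

open scoped Classical

namespace TypeIB

/-- The nonzero elements of `F`. -/
abbrev Fstar (F : Type*) [Field F] := {j : F // j ≠ 0}

/-- Variable nodes of the Type I-B graph: the root `r`, the nodes `v_y` (y ∈ F) and the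
nodes `(i,j)` with `i ∈ F`, `j ∈ F \ {0}`. -/
abbrev VN (F : Type*) [Field F] := Unit ⊕ (F ⊕ (F × Fstar F))

/-- Constraint nodes of the Type I-B graph: the root `r'`, the nodes `c_i` (i ∈ F) and the
nodes `(i,j)'` with `i ∈ F`, `j ∈ F \ {0}`. -/
abbrev CN (F : Type*) [Field F] := Unit ⊕ (F ⊕ (F × Fstar F))

/-- Adjacency of the Type I-B graph `G(p,s)`:
`r ~ c_i` for every `i`; `c_i ~ (i,j)` for every `j ≠ 0`; `r' ~ v_y` for every `y`;
`v_y ~ (y,j)'` for every `j ≠ 0`; and `(i,j) ~ (k, j + i·k)'` whenever `j + i·k ≠ 0`,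
except that the edges `(0,j) ~ (0,j)'` are omitted. -/
def adj (F : Type*) [Field F] : VN F → CN F → Prop
  | Sum.inl _, Sum.inl _ => False
  | Sum.inl _, Sum.inr (Sum.inl _) => True              -- r ~ c_i
  | Sum.inl _, Sum.inr (Sum.inr _) => False
  | Sum.inr (Sum.inl _), Sum.inl _ => True              -- v_y ~ r'
  | Sum.inr (Sum.inl _), Sum.inr (Sum.inl _) => False
  | Sum.inr (Sum.inl y), Sum.inr (Sum.inr (a, _)) => a = y   -- v_y ~ (y,b)'
  | Sum.inr (Sum.inr _), Sum.inl _ => False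
  | Sum.inr (Sum.inr (i, _)), Sum.inr (Sum.inl k) => k = i   -- c_i ~ (i,j)
  | Sum.inr (Sum.inr (i, j)), Sum.inr (Sum.inr (a, b)) =>
      (b : F) = (j : F) + i * a ∧ ¬(i = 0 ∧ a = 0)

end TypeIB

/-- Hamming weight of a vector: the number of nonzero coordinates. -/
noncomputable def hamWt {V K : Type*} [Zero K] (x : V → K) : ℕ :=
  Nat.card {v : V // x v ≠ 0}

namespace TypeIB

/-- The code of the Type I-B graph over `K`: vectors indexed by the variable nodes whose sum
over the neighbourhood of each constraint node vanishes. -/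
def InCode (F : Type*) [Field F] [Fintype F] (K : Type*) [AddCommMonoid K]
    (x : VN F → K) : Prop :=
  ∀ c : CN F, (∑ v : VN F, if adj F v c then x v else 0) = 0

/-- The minimum distance of the code of the Type I-B graph over `K`: the least Hamming
weight of a nonzero codeword. -/
noncomputable def dmin (F : Type*) [Field F] [Fintype F]
    (K : Type*) [AddCommMonoid K] : ℕ :=
  sInf {w | ∃ x : VN F → K, InCode F K x ∧ x ≠ 0 ∧ hamWt x = w}

end TypeIB

/-- The vector over GF(p) taking value 1 at `r`, at `v_0` and at each `(0,j)`; value −1 at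
`v_{−1}` and at each `(y,y)` with `y ≠ 0`; and value 0 elsewhere. -/
noncomputable def cw (p : ℕ) (F : Type*) [Field F] : TypeIB.VN F → ZMod p
  | Sum.inl _ => 1
  | Sum.inr (Sum.inl y) => if y = 0 then 1 else if y = -1 then -1 else 0
  | Sum.inr (Sum.inr (i, j)) => if i = 0 then 1 else if i = (j : F) then -1 else 0

namespace StmtAux

open TypeIB Finset

lemma exists_other {ι M : Type*} [Fintype ι] [AddCommMonoid M] (f : ι → M)
    (h : ∑ v, f v = 0) {v₀ : ι} (h0 : f v₀ ≠ 0) : ∃ v, v ≠ v₀ ∧ f v ≠ 0 := by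
  by_contra hc
  push_neg at hc
  exact h0 (by rw [← h, Fintype.sum_eq_single v₀ hc])

lemma card_le_hamWt {V K : Type*} [Fintype V] [Zero K] (x : V → K) (T : Finset V)
    (hT : ∀ v ∈ T, x v ≠ 0) : T.card ≤ hamWt x := by
  rw [hamWt, Nat.card_eq_fintype_card, Fintype.card_subtype]
  exact Finset.card_le_card (fun v hv => Finset.mem_filter.mpr ⟨mem_univ _, hT v hv⟩)

noncomputable def ind {K : Type*} [Zero K] (a : K) : ℕ := if a ≠ 0 then 1 else 0

lemma ind_of_ne {K : Type*} [Zero K] {a : K} (h : a ≠ 0) : ind a = 1 := if_pos h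

lemma ind_of_eq {K : Type*} [Zero K] {a : K} (h : a = 0) : ind a = 0 := if_neg (by simp [h])

lemma hamWt_eq {V K : Type*} [Fintype V] [Zero K] (x : V → K) :
    hamWt x = ∑ v : V, ind (x v) := by
  rw [hamWt, Nat.card_eq_fintype_card, Fintype.card_subtype, Finset.card_filter]
  exact Finset.sum_congr rfl (fun v _ => rfl)

lemma sum_pair' {ι M : Type*} [Fintype ι] [AddCommMonoid M] (f : ι → M)
    {v₁ v₂ : ι} (h12 : v₁ ≠ v₂) (h : ∀ v, v ≠ v₁ → v ≠ v₂ → f v = 0) :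
    ∑ v, f v = f v₁ + f v₂ := by
  rw [← Finset.sum_pair h12]
  refine (Finset.sum_subset (Finset.subset_univ _) ?_).symm
  intro v _ hv
  simp only [Finset.mem_insert, Finset.mem_singleton, not_or] at hv
  exact h v hv.1 hv.2

section Graph

variable {F : Type*} [Field F] [Fintype F] {M : Type*} [AddCommGroup M]

lemma card_Fstar : Fintype.card (Fstar F) = Fintype.card F - 1 := by
  have h : Fintype.card {j : F // ¬ (j = 0)} = Fintype.card F - Fintype.card {j : F // j = 0} :=
    Fintype.card_subtype_compl _
  simpa [Fintype.card_subtype_eq] using h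

lemma sum_VN {N : Type*} [AddCommMonoid N] (f : VN F → N) :
    ∑ v : VN F, f v = f (Sum.inl ()) + ((∑ y : F, f (Sum.inr (Sum.inl y)))
      + ∑ z : F × Fstar F, f (Sum.inr (Sum.inr z))) := by
  simp [Fintype.sum_sum_type]

lemma sum_constr_R (x : VN F → M) :
    (∑ v : VN F, if adj F v (Sum.inl ()) then x v else 0)
      = ∑ y : F, x (Sum.inr (Sum.inl y)) := by
  rw [sum_VN]; simp [adj]

lemma sum_constr_C (x : VN F → M) (k : F) :
    (∑ v : VN F, if adj F v (Sum.inr (Sum.inl k)) then x v else 0)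
      = x (Sum.inl ()) + ∑ z : F × Fstar F,
          (if k = z.1 then x (Sum.inr (Sum.inr z)) else 0) := by
  rw [sum_VN]; simp [adj]; congr

lemma sum_constr_P (x : VN F → M) (a : F) (b : Fstar F) :
    (∑ v : VN F, if adj F v (Sum.inr (Sum.inr (a, b))) then x v else 0)
      = x (Sum.inr (Sum.inl a)) + ∑ z : F × Fstar F,
          (if ((b : F) = (z.2 : F) + z.1 * a ∧ ¬(z.1 = 0 ∧ a = 0))
            then x (Sum.inr (Sum.inr z)) else 0) := by
  rw [sum_VN]; simp [adj, Finset.sum_ite_eq]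
  exact (Fintype.sum_eq_single a (fun y hy => if_neg (Ne.symm hy))).trans (if_pos rfl)

variable {x : VN F → M} (hx : InCode F M x)

include hx

lemma constr_R : ∑ y : F, x (Sum.inr (Sum.inl y)) = 0 := by
  rw [← sum_constr_R]; exact hx _

lemma constr_C (k : F) :
    x (Sum.inl ()) + ∑ z : F × Fstar F,
      (if k = z.1 then x (Sum.inr (Sum.inr z)) else 0) = 0 := by
  rw [← sum_constr_C]; exact hx _

lemma constr_P (a : F) (b : Fstar F) :
    x (Sum.inr (Sum.inl a)) + ∑ z : F × Fstar F,
      (if ((b : F) = (z.2 : F) + z.1 * a ∧ ¬(z.1 = 0 ∧ a = 0))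
        then x (Sum.inr (Sum.inr z)) else 0) = 0 := by
  rw [← sum_constr_P]; exact hx _

end Graph

section CW

variable (p : ℕ) {F : Type*} [Field F] [Fintype F]

lemma cw_inCode (hq0 : ((Fintype.card F : ℕ) : ZMod p) = 0) :
    InCode F (ZMod p) (cw p F) := by
  have hF1 : (-1 : F) ≠ 0 := neg_ne_zero.mpr one_ne_zero
  have h01 : (0 : F) ≠ -1 := fun h => hF1 h.symm
  intro c
  obtain (⟨⟩ | (k | ⟨a, b⟩)) := c
  · rw [sum_constr_R]
    rw [sum_pair' (fun y => cw p F (Sum.inr (Sum.inl y))) h01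
      (fun v h0 h1 => by simp [cw, h0, h1])]
    simp [cw, hF1, h01.symm]
  · rw [sum_constr_C]
    have key : ∑ z : F × Fstar F,
        (if k = z.1 then cw p F (Sum.inr (Sum.inr z)) else 0) = -1 := by
      by_cases hk : k = 0
      · subst hk
        have e1 : ∀ z : F × Fstar F,
            (if (0:F) = z.1 then cw p F (Sum.inr (Sum.inr z)) else 0)
              = if (0:F) = z.1 then 1 else 0 := by
          rintro ⟨i, j⟩
          by_cases h : (0:F) = i
          · subst h; simp [cw]
          · rw [if_neg h, if_neg h]
        rw [Finset.sum_congr rfl (fun z _ => e1 z), Fintype.sum_prod_type]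
        have e2 : ∀ i : F, (∑ _j : Fstar F, if (0:F) = i then (1 : ZMod p) else 0)
            = if (0:F) = i then ((Fintype.card F - 1 : ℕ) : ZMod p) else 0 := by
          intro i
          by_cases h : (0:F) = i <;> simp [h, card_Fstar, Finset.card_univ]
        rw [Finset.sum_congr rfl (fun i _ => e2 i), Finset.sum_ite_eq]
        have hcard : (1 : ℕ) ≤ Fintype.card F := Fintype.card_pos
        simp [Nat.cast_sub hcard, hq0]
      · rw [Fintype.sum_eq_single ((k, ⟨k, hk⟩) : F × Fstar F)]
        · simp [cw, hk]
        · rintro ⟨i, j⟩ hij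
          by_cases h : k = i
          · subst h
            have : (k : F) ≠ (j : F) := by
              intro hj
              exact hij (Prod.ext rfl (Subtype.ext hj.symm))
            simp [cw, hk, this]
          · simp [h]
    rw [key]; simp [cw]
  · rw [sum_constr_P]
    by_cases ha0 : a = 0
    · subst ha0
      have key : ∑ z : F × Fstar F,
          (if ((b : F) = (z.2 : F) + z.1 * 0 ∧ ¬(z.1 = 0 ∧ (0:F) = 0))
            then cw p F (Sum.inr (Sum.inr z)) else 0) = -1 := by
        rw [Fintype.sum_eq_single (((b : F), b) : F × Fstar F)]
        · simp [cw, b.2]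
        · rintro ⟨i, j⟩ hij
          by_cases hc : ((b : F) = (j : F) + i * 0 ∧ ¬(i = 0 ∧ (0:F) = 0))
          · obtain ⟨hc1, hc2⟩ := hc
            have hi0 : i ≠ 0 := fun h => hc2 ⟨h, rfl⟩
            have hjb : (j : F) = (b : F) := by
              rw [hc1]; ring
            rw [if_pos ⟨hc1, hc2⟩]
            have hij2 : i ≠ (j : F) := by
              intro h
              apply hij
              exact Prod.ext (by rw [h, hjb]) (Subtype.ext hjb)
            simp [cw, hi0, hij2]
          · exact if_neg hc
      rw [key]; simp [cw]
    · by_cases ham : a = -1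
      · subst ham
        have key : ∑ z : F × Fstar F,
            (if ((b : F) = (z.2 : F) + z.1 * (-1) ∧ ¬(z.1 = 0 ∧ (-1:F) = 0))
              then cw p F (Sum.inr (Sum.inr z)) else 0) = 1 := by
          rw [Fintype.sum_eq_single (((0 : F), b) : F × Fstar F)]
          · simp [cw, hF1]
          · rintro ⟨i, j⟩ hij
            by_cases hc : ((b : F) = (j : F) + i * (-1) ∧ ¬(i = 0 ∧ (-1:F) = 0))
            · have hc1 := hc.1
              rw [if_pos hc]
              by_cases hi0 : i = 0
              · subst hi0
                have hjb : (j : F) = (b : F) := by rw [hc1]; ring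
                have : (((0:F), j) : F × Fstar F) = ((0:F), b) := Prod.ext rfl (Subtype.ext hjb)
                exact absurd this hij
              · have hij2 : i ≠ (j : F) := by
                  intro h
                  rw [← h] at hc1
                  apply b.2
                  have : (b : F) = i - i := by rw [hc1]; ring
                  simpa using this
                simp [cw, hi0, hij2]
            · exact if_neg hc
        rw [key]; simp [cw, ha0, hF1]
      · -- a ≠ 0, a ≠ -1
        have h1a : (1 : F) + a ≠ 0 := by
          intro h
          apply ham
          linear_combination h
        set cc : F := (b : F) * (1 + a)⁻¹ with hcc
        have hccne : cc ≠ 0 := mul_ne_zero b.2 (inv_ne_zero h1a)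
        have hcc1a : cc * (1 + a) = (b : F) := by
          rw [hcc, mul_assoc, inv_mul_cancel₀ h1a, mul_one]
        have key : ∑ z : F × Fstar F,
            (if ((b : F) = (z.2 : F) + z.1 * a ∧ ¬(z.1 = 0 ∧ a = 0))
              then cw p F (Sum.inr (Sum.inr z)) else 0) = 0 := by
          rw [sum_pair' _ (show (((0:F), b) : F × Fstar F) ≠ ((cc, ⟨cc, hccne⟩) : F × Fstar F)
              from fun h => hccne (by simpa using (Prod.ext_iff.mp h).1.symm))]
          · have e1 : (if ((b : F) = (b : F) + (0:F) * a ∧ ¬((0:F) = 0 ∧ a = 0))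
                then cw p F (Sum.inr (Sum.inr ((0 : F), b))) else 0) = 1 := by
              rw [if_pos ⟨by ring, fun h => ha0 h.2⟩]
              simp [cw]
            have e2 : (if ((b : F) = (cc : F) + cc * a ∧ ¬(cc = 0 ∧ a = 0))
                then cw p F (Sum.inr (Sum.inr (cc, ⟨cc, hccne⟩))) else 0) = -1 := by
              rw [if_pos ⟨by rw [← hcc1a]; ring, fun h => hccne h.1⟩]
              simp [cw, hccne]
            rw [show ((((0:F), b) : F × Fstar F)).2 = b from rfl] at *
            simp only at e1 e2 ⊢
            rw [e1, e2]; ring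
          · rintro ⟨i, j⟩ hij1 hij2
            by_cases hc : ((b : F) = (j : F) + i * a ∧ ¬(i = 0 ∧ a = 0))
            · have hc1 := hc.1
              rw [if_pos hc]
              by_cases hi0 : i = 0
              · subst hi0
                have hjb : (j : F) = (b : F) := by rw [hc1]; ring
                have : (((0:F), j) : F × Fstar F) = ((0:F), b) := Prod.ext rfl (Subtype.ext hjb)
                exact absurd this hij1
              · have hij3 : i ≠ (j : F) := by
                  intro h
                  apply hij2
                  have hi1a : i * (1 + a) = (b : F) := by linear_combination h - hc1
                  have hib : i = cc := by
                    rw [hcc, ← hi1a, mul_inv_cancel_right₀ h1a]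
                  exact Prod.ext hib (Subtype.ext (by rw [← h]; exact hib))
                simp [cw, hi0, hij3]
            · exact if_neg hc
        rw [key]; simp [cw, ha0, ham]

lemma cw_hamWt (h1 : (1 : ZMod p) ≠ 0) (hm1 : (-1 : ZMod p) ≠ 0) :
    hamWt (cw p F) = 2 * Fintype.card F + 1 := by
  have hF1 : (-1 : F) ≠ 0 := neg_ne_zero.mpr one_ne_zero
  have h01 : (0 : F) ≠ -1 := fun h => hF1 h.symm
  have hq1 : 1 ≤ Fintype.card F := Fintype.card_pos
  rw [hamWt_eq, sum_VN]
  have e0 : ind (cw p F (Sum.inl ())) = 1 := ind_of_ne (by simp [cw, h1])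
  have e1 : ∑ y : F, ind (cw p F (Sum.inr (Sum.inl y))) = 2 := by
    rw [sum_pair' _ h01 (fun v h0 hm => ind_of_eq (by simp [cw, h0, hm]))]
    rw [ind_of_ne (by simp [cw, h1]), ind_of_ne (by simp [cw, hF1, h01.symm, hm1])]
  have e2 : ∑ z : F × Fstar F, ind (cw p F (Sum.inr (Sum.inr z)))
      = (Fintype.card F - 1) + (Fintype.card F - 1) := by
    rw [Fintype.sum_prod_type]
    have inner : ∀ i : F, (∑ j : Fstar F, ind (cw p F (Sum.inr (Sum.inr (i, j)))))
        = if i = 0 then Fintype.card F - 1 else 1 := by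
      intro i
      by_cases hi : i = 0
      · subst hi
        rw [if_pos rfl]
        rw [Finset.sum_congr rfl (fun (j : Fstar F) _ => ind_of_ne (by simp [cw, h1]))]
        simp [card_Fstar, Finset.card_univ]
      · rw [if_neg hi, Fintype.sum_eq_single (⟨i, hi⟩ : Fstar F)]
        · exact ind_of_ne (by simp [cw, hi, hm1])
        · intro j hj
          have hij : i ≠ (j : F) := fun h => hj (Subtype.ext h.symm)
          exact ind_of_eq (by simp [cw, hi, hij])
    rw [Finset.sum_congr rfl (fun i _ => inner i)]
    rw [← Finset.add_sum_erase _ _ (Finset.mem_univ (0:F))]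
    rw [if_pos rfl]
    have : ∀ i ∈ Finset.univ.erase (0:F), (if i = 0 then Fintype.card F - 1 else 1) = 1 := by
      intro i hi
      rw [if_neg (Finset.mem_erase.mp hi).1]
    rw [Finset.sum_congr rfl this, Finset.sum_const, Finset.card_erase_of_mem (Finset.mem_univ _),
      Finset.card_univ, smul_eq_mul, mul_one]
  rw [e0, e1, e2]
  omega

end CW

section Lower

variable {F : Type*} [Field F] [Fintype F] {M : Type*} [AddCommGroup M]

lemma card_ne (e : F) : Fintype.card {a : F // a ≠ e} = Fintype.card F - 1 := by
  have h : Fintype.card {a : F // ¬ (a = e)} = Fintype.card F - Fintype.card {a : F // a = e} :=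
    Fintype.card_subtype_compl _
  simpa [Fintype.card_subtype_eq] using h

lemma lower_bound {x : VN F → M} (hx : InCode F M x) (hne : x ≠ 0) :
    Fintype.card F + 1 ≤ hamWt x := by
  have hq1 : 1 ≤ Fintype.card F := Fintype.card_pos
  by_cases hr : x (Sum.inl ()) = 0
  case neg =>
    -- Case 1 : the root variable is nonzero
    have H : ∀ k : F, ∃ z : F × Fstar F, k = z.1 ∧ x (Sum.inr (Sum.inr z)) ≠ 0 := by
      intro k
      have h := constr_C hx k
      have hsum : (∑ z : F × Fstar F,
          if k = z.1 then x (Sum.inr (Sum.inr z)) else 0) ≠ 0 := by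
        rw [eq_neg_of_add_eq_zero_right h]
        exact neg_ne_zero.mpr hr
      obtain ⟨z, _, hz⟩ := Finset.exists_ne_zero_of_sum_ne_zero hsum
      by_cases hk : k = z.1
      · exact ⟨z, hk, by rwa [if_pos hk] at hz⟩
      · exact (hz (if_neg hk)).elim
    choose g hg1 hg2 using H
    have hginj : Function.Injective (fun k : F => (Sum.inr (Sum.inr (g k)) : VN F)) := by
      intro k1 k2 h
      have hgk : g k1 = g k2 := by simpa using h
      rw [hg1 k1, hg1 k2, hgk]
    set T : Finset (VN F) := insert (Sum.inl ())
      (Finset.univ.image (fun k : F => (Sum.inr (Sum.inr (g k)) : VN F))) with hT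
    have hcard : T.card = Fintype.card F + 1 := by
      rw [hT, Finset.card_insert_of_notMem (by simp),
        Finset.card_image_of_injective _ hginj, Finset.card_univ]
    have hsub : ∀ v ∈ T, x v ≠ 0 := by
      intro v hv
      rcases Finset.mem_insert.mp hv with h | h
      · rw [h]; exact hr
      · obtain ⟨k, _, hk⟩ := Finset.mem_image.mp h
        rw [← hk]; exact hg2 k
    calc Fintype.card F + 1 = T.card := hcard.symm
    _ ≤ hamWt x := card_le_hamWt x T hsub
  case pos =>
    by_cases hv : ∃ a : F, x (Sum.inr (Sum.inl a)) ≠ 0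
    · -- Case 2 : some v-node is nonzero
      obtain ⟨a, ha⟩ := hv
      obtain ⟨y, hy_ne, hy⟩ := exists_other _ (constr_R hx) ha
      have H : ∀ b : Fstar F, ∃ z : F × Fstar F,
          ((b : F) = (z.2 : F) + z.1 * a) ∧ x (Sum.inr (Sum.inr z)) ≠ 0 := by
        intro b
        have h := constr_P hx a b
        have hsum : (∑ z : F × Fstar F,
            if ((b : F) = (z.2 : F) + z.1 * a ∧ ¬(z.1 = 0 ∧ a = 0))
              then x (Sum.inr (Sum.inr z)) else 0) ≠ 0 := by
          rw [eq_neg_of_add_eq_zero_right h]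
          exact neg_ne_zero.mpr ha
        obtain ⟨z, _, hz⟩ := Finset.exists_ne_zero_of_sum_ne_zero hsum
        by_cases hc : ((b : F) = (z.2 : F) + z.1 * a ∧ ¬(z.1 = 0 ∧ a = 0))
        · exact ⟨z, hc.1, by rwa [if_pos hc] at hz⟩
        · exact (hz (if_neg hc)).elim
      choose g hg1 hg2 using H
      have hginj : Function.Injective
          (fun b : Fstar F => (Sum.inr (Sum.inr (g b)) : VN F)) := by
        intro b1 b2 h
        have hgb : g b1 = g b2 := by simpa using h
        apply Subtype.ext
        rw [hg1 b1, hg1 b2, hgb]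
      set T : Finset (VN F) := insert (Sum.inr (Sum.inl a)) (insert (Sum.inr (Sum.inl y))
        (Finset.univ.image (fun b : Fstar F => (Sum.inr (Sum.inr (g b)) : VN F)))) with hT
      have hm1 : (Sum.inr (Sum.inl y) : VN F) ∉
          Finset.univ.image (fun b : Fstar F => (Sum.inr (Sum.inr (g b)) : VN F)) := by simp
      have hm2 : (Sum.inr (Sum.inl a) : VN F) ∉ insert (Sum.inr (Sum.inl y))
          (Finset.univ.image (fun b : Fstar F => (Sum.inr (Sum.inr (g b)) : VN F))) := by
        intro hmem
        rcases Finset.mem_insert.mp hmem with h | h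
        · exact hy_ne ((by simpa using h : a = y)).symm
        · obtain ⟨b, _, hb⟩ := Finset.mem_image.mp h
          exact absurd hb (by simp)
      have hcard : T.card = (Fintype.card F - 1) + 1 + 1 := by
        rw [hT, Finset.card_insert_of_notMem hm2, Finset.card_insert_of_notMem hm1,
          Finset.card_image_of_injective _ hginj, Finset.card_univ, card_Fstar]
      have hsub : ∀ v ∈ T, x v ≠ 0 := by
        intro v hv
        rcases Finset.mem_insert.mp hv with h | h
        · rw [h]; exact ha
        rcases Finset.mem_insert.mp h with h | h
        · rw [h]; exact hy
        · obtain ⟨b, _, hb⟩ := Finset.mem_image.mp h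
          rw [← hb]; exact hg2 b
      have := card_le_hamWt x T hsub
      omega
    · -- Case 3 : only line nodes are nonzero
      push_neg at hv
      have hline : ∃ z : F × Fstar F, x (Sum.inr (Sum.inr z)) ≠ 0 := by
        by_contra h
        push_neg at h
        apply hne
        funext v
        obtain (⟨⟩ | (yy | z)) := v
        · exact hr
        · exact hv yy
        · exact h z
      obtain ⟨⟨i, j⟩, hij⟩ := hline
      -- a parallel line
      have hci := constr_C hx i
      rw [hr, zero_add] at hci
      obtain ⟨z', hz'ne, hz'⟩ := exists_other _ hci (v₀ := ((i, j) : F × Fstar F))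
        (by rw [if_pos rfl]; exact hij)
      have hz'cond : i = z'.1 := by
        by_cases h : i = z'.1
        · exact h
        · exact ((hz' (if_neg h)).elim : _)
      have hz'x : x (Sum.inr (Sum.inr z')) ≠ 0 := by rwa [if_pos hz'cond] at hz'
      -- the other lines through the points of the line (i,j)
      have H : ∀ a : F, ((j : F) + i * a ≠ 0 ∧ ¬(i = 0 ∧ a = 0)) →
          ∃ z : F × Fstar F, z ≠ (i, j) ∧ ((j : F) + i * a = (z.2 : F) + z.1 * a) ∧
            x (Sum.inr (Sum.inr z)) ≠ 0 := by
        intro a hA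
        have h := constr_P hx a ⟨(j : F) + i * a, hA.1⟩
        rw [hv a, zero_add] at h
        obtain ⟨z, hzne, hz⟩ := exists_other _ h (v₀ := ((i, j) : F × Fstar F))
          (by rw [if_pos ⟨rfl, hA.2⟩]; exact hij)
        by_cases hc : (((⟨(j : F) + i * a, hA.1⟩ : Fstar F) : F) = (z.2 : F) + z.1 * a
            ∧ ¬(z.1 = 0 ∧ a = 0))
        · exact ⟨z, hzne, hc.1, by rwa [if_pos hc] at hz⟩
        · exact ((hz (if_neg hc)).elim : _)
      choose g hg1 hg2 hg3 using
        (fun a : {a : F // (j : F) + i * a ≠ 0 ∧ ¬(i = 0 ∧ a = 0)} => H a.1 a.2)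
      -- injectivity
      have hginj : Function.Injective
          (fun a : {a : F // (j : F) + i * a ≠ 0 ∧ ¬(i = 0 ∧ a = 0)} =>
            (Sum.inr (Sum.inr (g a)) : VN F)) := by
        intro a1 a2 h
        have hga : g a1 = g a2 := by simpa using h
        apply Subtype.ext
        by_contra hne12
        have e1 := hg2 a1
        have e2 := hg2 a2
        rw [hga] at e1
        have hzero : (i - (g a2).1) * ((a1 : F) - (a2 : F)) = 0 := by
          linear_combination e1 - e2
        rcases mul_eq_zero.mp hzero with h0 | h0
        · have hzi : i = (g a2).1 := by linear_combination h0
          have hzj : ((g a2).2 : F) = (j : F) := by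
            linear_combination a2.1 * hzi - e2
          exact hg1 a2 (Prod.ext hzi.symm (Subtype.ext hzj))
        · exact hne12 (by linear_combination h0)
      -- g a is never the parallel line z'
      have hgz' : ∀ a : {a : F // (j : F) + i * a ≠ 0 ∧ ¬(i = 0 ∧ a = 0)}, g a ≠ z' := by
        intro a hgz
        have e2 := hg2 a
        rw [hgz] at e2
        have hzj : (z'.2 : F) = (j : F) := by
          linear_combination a.1 * hz'cond - e2
        exact hz'ne (Prod.ext hz'cond.symm (Subtype.ext hzj))
      -- a default excluded point
      obtain ⟨e, he⟩ : ∃ e : F, ∀ a : F, a ≠ e →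
          ((j : F) + i * a ≠ 0 ∧ ¬(i = 0 ∧ a = 0)) := by
        by_cases hi : i = 0
        · exact ⟨0, fun a hae => ⟨by rw [hi, zero_mul, add_zero]; exact j.2,
            fun h => hae h.2⟩⟩
        · refine ⟨-(j : F) * i⁻¹, fun a hae => ⟨fun h0 => hae ?_, fun h => hi h.1⟩⟩
          field_simp
          linear_combination h0
      have hcardA : Fintype.card F - 1 ≤
          Fintype.card {a : F // (j : F) + i * a ≠ 0 ∧ ¬(i = 0 ∧ a = 0)} := by
        have hinj : Function.Injective (fun a : {a : F // a ≠ e} =>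
            (⟨a.1, he a.1 a.2⟩ : {a : F // (j : F) + i * a ≠ 0 ∧ ¬(i = 0 ∧ a = 0)})) :=
          fun a1 a2 h => Subtype.ext (by simpa using h)
        have h := Fintype.card_le_of_injective _ hinj
        rwa [card_ne] at h
      set T : Finset (VN F) := insert (Sum.inr (Sum.inr (i, j))) (insert (Sum.inr (Sum.inr z'))
        (Finset.univ.image (fun a : {a : F // (j : F) + i * a ≠ 0 ∧ ¬(i = 0 ∧ a = 0)} =>
          (Sum.inr (Sum.inr (g a)) : VN F)))) with hT
      have hm1 : (Sum.inr (Sum.inr z') : VN F) ∉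
          Finset.univ.image (fun a : {a : F // (j : F) + i * a ≠ 0 ∧ ¬(i = 0 ∧ a = 0)} =>
            (Sum.inr (Sum.inr (g a)) : VN F)) := by
        intro hmem
        obtain ⟨aa, _, haa⟩ := Finset.mem_image.mp hmem
        exact hgz' aa (by simpa using haa)
      have hm2 : (Sum.inr (Sum.inr (i, j)) : VN F) ∉ insert (Sum.inr (Sum.inr z'))
          (Finset.univ.image (fun a : {a : F // (j : F) + i * a ≠ 0 ∧ ¬(i = 0 ∧ a = 0)} =>
            (Sum.inr (Sum.inr (g a)) : VN F))) := by
        intro hmem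
        rcases Finset.mem_insert.mp hmem with h | h
        · exact hz'ne ((by simpa using h : (i, j) = z')).symm
        · obtain ⟨aa, _, haa⟩ := Finset.mem_image.mp h
          exact hg1 aa (by simpa using haa)
      have hcard : T.card =
          Fintype.card {a : F // (j : F) + i * a ≠ 0 ∧ ¬(i = 0 ∧ a = 0)} + 1 + 1 := by
        rw [hT, Finset.card_insert_of_notMem hm2, Finset.card_insert_of_notMem hm1,
          Finset.card_image_of_injective _ hginj, Finset.card_univ]
      have hsub : ∀ v ∈ T, x v ≠ 0 := by
        intro v hvv
        rcases Finset.mem_insert.mp hvv with h | h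
        · rw [h]; exact hij
        rcases Finset.mem_insert.mp h with h | h
        · rw [h]; exact hz'x
        · obtain ⟨aa, _, haa⟩ := Finset.mem_image.mp h
          rw [← haa]; exact hg3 aa
      have := card_le_hamWt x T hsub
      omega

end Lower

end StmtAux

theorem stmt_7 (p s : ℕ) (hp : p.Prime) (hodd : p ≠ 2) (hs : 0 < s)
    (F : Type*) [Field F] [Fintype F] (hF : Fintype.card F = p ^ s) :
    -- the given vector is a codeword of the p-ary code of G(p,s)
    TypeIB.InCode F (ZMod p) (cw p F) ∧
    -- of Hamming weight 2q + 1
    hamWt (cw p F) = 2 * p ^ s + 1 ∧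
    -- consequently q + 1 ≤ d_min ≤ 2q + 1
    p ^ s + 1 ≤ TypeIB.dmin F (ZMod p) ∧
    TypeIB.dmin F (ZMod p) ≤ 2 * p ^ s + 1 := by
  have h1 : (1 : ZMod p) ≠ 0 := by
    haveI : Fact p.Prime := ⟨hp⟩
    exact one_ne_zero
  have hm1 : (-1 : ZMod p) ≠ 0 := by
    haveI : Fact p.Prime := ⟨hp⟩
    exact neg_ne_zero.mpr one_ne_zero
  have hq0 : ((Fintype.card F : ℕ) : ZMod p) = 0 := by
    rw [hF]
    push_cast
    rw [ZMod.natCast_self]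
    exact zero_pow hs.ne'
  have hin : TypeIB.InCode F (ZMod p) (cw p F) := StmtAux.cw_inCode p hq0
  have hwt : hamWt (cw p F) = 2 * p ^ s + 1 := by
    rw [StmtAux.cw_hamWt p h1 hm1, hF]
  have hcwne : cw p F ≠ 0 := by
    intro h
    exact h1 (by simpa [cw] using congrFun h (Sum.inl ()))
  have hmem : 2 * p ^ s + 1 ∈
      {w | ∃ x : TypeIB.VN F → ZMod p, TypeIB.InCode F (ZMod p) x ∧ x ≠ 0 ∧ hamWt x = w} :=
    ⟨cw p F, hin, hcwne, hwt⟩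
  refine ⟨hin, hwt, ?_, Nat.sInf_le hmem⟩
  obtain ⟨x, hx, hxne, hxw⟩ := Nat.sInf_mem (⟨_, hmem⟩ : Set.Nonempty _)
  calc p ^ s + 1 = Fintype.card F + 1 := by rw [hF]
  _ ≤ hamWt x := StmtAux.lower_bound hx hxne
  _ = TypeIB.dmin F (ZMod p) := hxw
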